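/- Let [U_k U_c] ∈ ℝ^{p×p} and [V_k V_c] ∈ ℝ^{m×m} be orthogonal matrices with U_k ∈ ℝ^{p×k} and V_k ∈ ℝ^{m×k}. Let Δ_A ∈ ℝ^{p×m}, Δ_{A,2} = U_c·U_cᵀ·Δ_A·V_c·V_cᵀ, Δ_{A,1} = Δ_A − Δ_{A,2}. Let Δ_Φ ∈ ℝ^{p×q}, let S be a set of entry positions with card(S) = s, and let Δ_{Φ,1} agree with Δ_Φ on S and vanish elsewhere, Δ_{Φ,2} = Δ_Φ − Δ_{Φ,1}. Let λ_A ≥ 0, λ_Φ ≥ 0 and assume the cone condition λ_A·‖Δ_{A,2}‖_* + λ_Φ·‖vec(Δ_{Φ,2})‖₁ ≤ 3·λ_A·‖Δ_{A,1}‖_* + 3·λ_Φ·‖vec(Δ_{Φ,1})‖₁. Then λ_A·‖Δ_A‖_* + λ_Φ·‖vec(Δ_Φ)‖₁ ≤ 4·(λ_A·√(2k)·‖Δ_A‖_F + λ_Φ·√s·‖Δ_Φ‖_F). -/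

import Mathlib

open Matrix

/-- The positive semidefinite square root of a positive semidefinite matrix, as
`Matrix.PosSemidef.sqrt` was defined in Mathlib (Dec 2024). -/
noncomputable def psdSqrtOld {n : Type*} [Fintype n] [DecidableEq n] {A : Matrix n n ℝ}
    (hA : A.PosSemidef) : Matrix n n ℝ :=
  hA.1.eigenvectorUnitary.1 * diagonal ((↑) ∘ (√·) ∘ hA.1.eigenvalues) *
  (star hA.1.eigenvectorUnitary : Matrix n n ℝ)

/-- Frobenius norm of a real matrix: `(tr(MᵀM))^{1/2}`. -/
noncomputable def frobNorm {m n : ℕ} (M : Matrix (Fin m) (Fin n) ℝ) : ℝ :=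
  Real.sqrt ((Mᵀ * M).trace)

/-- Nuclear norm of a real matrix: the trace of the positive semidefinite
square root of `MᵀM` (= sum of singular values). -/
noncomputable def nuclearNorm {m n : ℕ} (M : Matrix (Fin m) (Fin n) ℝ) : ℝ :=
  (psdSqrtOld (Matrix.posSemidef_conjTranspose_mul_self M)).trace

/-- Spectral (ℓ2 → ℓ2 operator) norm of a real matrix: its largest singular value. -/
noncomputable def opNorm {m n : ℕ} (M : Matrix (Fin m) (Fin n) ℝ) : ℝ :=
  ‖LinearMap.toContinuousLinearMap (Matrix.toEuclideanLin M)‖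

/-- The ℓ1 norm of the vectorization of a matrix. -/
noncomputable def vecL1 {m n : ℕ} (M : Matrix (Fin m) (Fin n) ℝ) : ℝ :=
  ∑ i, ∑ j, |M i j|

/-- The ℓ∞ norm of the vectorization of a matrix. -/
noncomputable def vecLinf {m n : ℕ} (M : Matrix (Fin m) (Fin n) ℝ) : ℝ :=
  ⨆ i, ⨆ j, |M i j|

/-- Frobenius (trace) inner product of two matrices. -/
noncomputable def traceInner {m n : ℕ} (M N : Matrix (Fin m) (Fin n) ℝ) : ℝ :=
  (Mᵀ * N).trace

open scoped Classical in
/-- The inverse of the positive semidefinite square root of a positive semidefinite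
matrix (junk value `0` if the matrix is not positive semidefinite). -/
noncomputable def matInvSqrt {r : ℕ} (S : Matrix (Fin r) (Fin r) ℝ) :
    Matrix (Fin r) (Fin r) ℝ :=
  if h : S.PosSemidef then (psdSqrtOld h)⁻¹ else 0

lemma psdSqrtOld_posSemidef {n : Type*} [Fintype n] [DecidableEq n] {A : Matrix n n ℝ}
    (hA : A.PosSemidef) : (psdSqrtOld hA).PosSemidef := by
  have hd : (diagonal (Real.sqrt ∘ hA.1.eigenvalues)).PosSemidef :=
    PosSemidef.diagonal (fun i => Real.sqrt_nonneg _)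
  have h2 := hd.mul_mul_conjTranspose_same (hA.1.eigenvectorUnitary : Matrix n n ℝ)
  simp only [psdSqrtOld, Unitary.coe_star, Matrix.star_eq_conjTranspose]
  exact h2

lemma psdSqrtOld_mul_self {n : Type*} [Fintype n] [DecidableEq n] {A : Matrix n n ℝ}
    (hA : A.PosSemidef) : psdSqrtOld hA * psdSqrtOld hA = A := by
  set V : Matrix n n ℝ := (hA.1.eigenvectorUnitary : Matrix n n ℝ) with hVdef
  have hV1 : star V * V = 1 := hA.1.eigenvectorUnitary.2.1
  have spec : A = V * diagonal hA.1.eigenvalues * star V := by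
    have h := hA.1.spectral_theorem
    rwa [RCLike.ofReal_real_eq_id, Function.id_comp] at h
  have e : psdSqrtOld hA = V * diagonal (Real.sqrt ∘ hA.1.eigenvalues) * star V := rfl
  rw [e]
  conv_rhs => rw [spec]
  calc V * diagonal (Real.sqrt ∘ hA.1.eigenvalues) * star V *
        (V * diagonal (Real.sqrt ∘ hA.1.eigenvalues) * star V)
      = V * (diagonal (Real.sqrt ∘ hA.1.eigenvalues) * (star V * V) *
        diagonal (Real.sqrt ∘ hA.1.eigenvalues)) * star V := by simp only [Matrix.mul_assoc]
    _ = V * diagonal hA.1.eigenvalues * star V := by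
        rw [hV1, Matrix.mul_one, diagonal_mul_diagonal]
        congr 3
        funext i
        exact Real.mul_self_sqrt (hA.eigenvalues_nonneg i)

section helpers
variable {a b n : ℕ}

lemma conjT_eq (M : Matrix (Fin a) (Fin b) ℝ) : Mᴴ = Mᵀ := by
  ext i j; simp [conjTranspose_apply]

lemma trace_tmul_nonneg (M : Matrix (Fin a) (Fin b) ℝ) : 0 ≤ (Mᵀ * M).trace := by
  rw [Matrix.trace]
  refine Finset.sum_nonneg fun j _ => ?_
  simp only [diag_apply, mul_apply, transpose_apply]
  exact Finset.sum_nonneg fun i _ => mul_self_nonneg _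

lemma trace_tmul_eq_sum_sq (M : Matrix (Fin a) (Fin b) ℝ) :
    (Mᵀ * M).trace = ∑ j, ∑ i, (M i j)^2 := by
  rw [Matrix.trace]
  refine Finset.sum_congr rfl fun j _ => ?_
  simp [diag_apply, mul_apply, sq]

lemma frobNorm_sq (M : Matrix (Fin a) (Fin b) ℝ) :
    Real.sqrt ((Mᵀ * M).trace) ^ 2 = (Mᵀ * M).trace :=
  Real.sq_sqrt (trace_tmul_nonneg M)

lemma trace_conj_unitary (V D : Matrix (Fin n) (Fin n) ℝ) (hV : star V * V = 1) :
    (V * D * star V).trace = D.trace := by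
  rw [Matrix.trace_mul_cycle, hV, Matrix.one_mul]

end helpers

section contraction
variable {a b n : ℕ}

lemma dot_self_nonneg (w : Fin n → ℝ) : 0 ≤ w ⬝ᵥ w :=
  Finset.sum_nonneg fun i _ => mul_self_nonneg _

lemma psd_dot_le {Y : Matrix (Fin a) (Fin b) ℝ} (h : (1 - Yᴴ * Y).PosSemidef)
    (u : Fin b → ℝ) : (Y *ᵥ u) ⬝ᵥ (Y *ᵥ u) ≤ u ⬝ᵥ u := by
  have h2 := h.dotProduct_mulVec_nonneg u
  have hstar : star u = u := by simp
  rw [hstar, sub_mulVec, one_mulVec, dotProduct_sub, ← mulVec_mulVec,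
    dotProduct_mulVec, vecMul_conjTranspose] at h2
  simp only [star_trivial] at h2
  linarith
end contraction

section contraction2
variable {a b n : ℕ}

lemma cs_dot (u v : Fin n → ℝ) : (u ⬝ᵥ v)^2 ≤ (u ⬝ᵥ u) * (v ⬝ᵥ v) := by
  have := Finset.sum_mul_sq_le_sq_mul_sq Finset.univ u v
  simp only [dotProduct, sq] at this ⊢
  calc (∑ i, u i * v i) * (∑ i, u i * v i) ≤ (∑ i, u i * u i) * ∑ i, v i * v i := by
        simpa [sq] using this
    _ = _ := rfl

lemma contr_transfer {Y : Matrix (Fin a) (Fin b) ℝ} (h : (1 - Yᴴ * Y).PosSemidef) :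
    (1 - Y * Yᴴ).PosSemidef := by
  refine PosSemidef.of_dotProduct_mulVec_nonneg ?_ ?_
  · exact (isHermitian_one).sub (isHermitian_mul_conjTranspose_self Y)
  intro z
  have hstar : star z = z := by simp
  rw [hstar, sub_mulVec, one_mulVec, dotProduct_sub, ← mulVec_mulVec]
  set w := Yᴴ *ᵥ z with hw
  have hzw : z ⬝ᵥ (Y *ᵥ w) = w ⬝ᵥ w := by
    rw [dotProduct_mulVec]
    congr 1
    rw [hw, conjT_eq, mulVec_transpose]
  rw [hzw]
  have h1 : (Y *ᵥ w) ⬝ᵥ (Y *ᵥ w) ≤ w ⬝ᵥ w := psd_dot_le h w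
  have h2 : (w ⬝ᵥ w)^2 ≤ (z ⬝ᵥ z) * (w ⬝ᵥ w) := by
    calc (w ⬝ᵥ w)^2 = (z ⬝ᵥ (Y *ᵥ w))^2 := by rw [hzw]
      _ ≤ (z ⬝ᵥ z) * ((Y *ᵥ w) ⬝ᵥ (Y *ᵥ w)) := cs_dot _ _
      _ ≤ (z ⬝ᵥ z) * (w ⬝ᵥ w) := by
          have := dot_self_nonneg z
          nlinarith
  have h3 := dot_self_nonneg w
  have h4 := dot_self_nonneg z
  nlinarith
end contraction2

section traceK
variable {n : ℕ}

lemma trace_mul_le_of_contr {S Y : Matrix (Fin n) (Fin n) ℝ} (hS : S.PosSemidef)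
    (hY : (1 - Yᴴ * Y).PosSemidef) : (Y * S).trace ≤ S.trace := by
  set R := psdSqrtOld hS with hRdef
  have hR : R.PosSemidef := psdSqrtOld_posSemidef hS
  have hRR : R * R = S := psdSqrtOld_mul_self hS
  have hRsym : ∀ i j, R i j = R j i := by
    intro i j
    conv_lhs => rw [← hR.1]
    simp [conjTranspose_apply]
  have key : ∀ u : Fin n → ℝ, u ⬝ᵥ (Y *ᵥ u) ≤ u ⬝ᵥ u := by
    intro u
    have h1 := psd_dot_le hY u
    have h2 := dot_self_nonneg (u - Y *ᵥ u)
    rw [dotProduct_sub, sub_dotProduct, sub_dotProduct, dotProduct_comm (Y *ᵥ u) u] at h2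
    linarith
  have htr : (Y * S).trace = (R * Y * R).trace := by
    rw [← hRR, ← Matrix.mul_assoc, Matrix.trace_mul_cycle]
  rw [htr, ← hRR]
  rw [Matrix.trace, Matrix.trace]
  apply Finset.sum_le_sum
  intro i _
  have e1 : (R * Y * R).diag i = (fun a => R a i) ⬝ᵥ (Y *ᵥ (fun a => R a i)) := by
    simp only [diag_apply, mul_apply, dotProduct, mulVec, dotProduct]
    calc ∑ x, (∑ j, R i j * Y j x) * R x i
        = ∑ x, ∑ j, R i j * Y j x * R x i := by simp_rw [Finset.sum_mul]
      _ = ∑ j, ∑ x, R i j * Y j x * R x i := Finset.sum_comm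
      _ = ∑ j, R j i * ∑ x, Y j x * R x i := by
            refine Finset.sum_congr rfl fun j _ => ?_
            rw [Finset.mul_sum]
            refine Finset.sum_congr rfl fun x _ => ?_
            rw [hRsym i j]; ring
  have e2 : (R * R).diag i = (fun a => R a i) ⬝ᵥ (fun a => R a i) := by
    simp only [diag_apply, mul_apply, dotProduct]
    apply Finset.sum_congr rfl
    intro x _
    rw [hRsym i x]
  rw [e1, e2]
  exact key _
end traceK

section polar
variable {a b : ℕ}

lemma polar (M : Matrix (Fin a) (Fin b) ℝ) :
    ∃ W : Matrix (Fin a) (Fin b) ℝ,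
      (1 - Wᴴ * W).PosSemidef ∧
      W * psdSqrtOld (posSemidef_conjTranspose_mul_self M) = M ∧
      (Wᴴ * M).trace = (psdSqrtOld (posSemidef_conjTranspose_mul_self M)).trace := by
  have hN := posSemidef_conjTranspose_mul_self M
  set V : Matrix (Fin b) (Fin b) ℝ := (hN.1.eigenvectorUnitary : Matrix (Fin b) (Fin b) ℝ) with hVdef
  set μ : Fin b → ℝ := hN.1.eigenvalues with hμdef
  have hV1 : star V * V = 1 := hN.1.eigenvectorUnitary.2.1
  have hV2 : V * star V = 1 := hN.1.eigenvectorUnitary.2.2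
  have hμ0 : ∀ i, 0 ≤ μ i := hN.eigenvalues_nonneg
  have spec : Mᴴ * M = V * diagonal μ * star V := by
    have h := hN.1.spectral_theorem
    rwa [RCLike.ofReal_real_eq_id, Function.id_comp] at h
  have sqrt_eq : psdSqrtOld hN = V * diagonal (Real.sqrt ∘ μ) * star V := by
    rfl
  set g : Fin b → ℝ := fun i => if μ i = 0 then 0 else (Real.sqrt (μ i))⁻¹ with hgdef
  set e : Fin b → ℝ := fun i => if μ i = 0 then 0 else 1 with hedef
  set W : Matrix (Fin a) (Fin b) ℝ := M * V * diagonal g * star V with hWdef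
  have hdiagN : star V * (Mᴴ * M) * V = diagonal μ := by
    rw [spec, Matrix.mul_assoc, Matrix.mul_assoc, hV1, Matrix.mul_one, ← Matrix.mul_assoc,
      hV1, Matrix.one_mul]
  -- columns of M*V with zero eigenvalue vanish
  have hcol : ∀ j, μ j = 0 → ∀ i, (M * V) i j = 0 := by
    intro j hj i
    have hsum : ∑ i2, ((M * V) i2 j)^2 = μ j := by
      have h1 : ((M * V)ᴴ * (M * V)) j j = μ j := by
        rw [conjTranspose_mul, Matrix.mul_assoc, ← Matrix.mul_assoc Mᴴ M, ← Matrix.mul_assoc Vᴴ _ V]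
        rw [← Matrix.star_eq_conjTranspose V] at *
        rw [hdiagN]
        simp [diagonal_apply_eq]
      rw [← h1, mul_apply]
      apply Finset.sum_congr rfl
      intro i2 _
      simp [conjTranspose_apply, sq]
    have h0 : ((M * V) i j)^2 = 0 :=
      (Finset.sum_eq_zero_iff_of_nonneg (s := Finset.univ)
        (f := fun i2 => ((M * V) i2 j)^2) (fun i2 _ => sq_nonneg _)).mp
        (by rw [hsum, hj]) i (Finset.mem_univ i)
    exact pow_eq_zero_iff (n := 2) (by norm_num) |>.mp h0
  have hMVe : M * V * diagonal e = M * V := by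
    ext i j
    rw [mul_diagonal]
    by_cases hj : μ j = 0
    · rw [hcol j hj i]; ring
    · simp [hedef, hj]
  have hWconj : Wᴴ = V * diagonal g * (star V * Mᴴ) := by
    rw [hWdef]
    have hg : star g = g := by ext i; simp
    have hdg : star (diagonal g) = diagonal g := by
      rw [Matrix.star_eq_conjTranspose, diagonal_conjTranspose, hg]
    simp only [conjTranspose_mul, diagonal_conjTranspose, hg,
      ← Matrix.star_eq_conjTranspose, star_star, StarMul.star_mul, hdg, Matrix.mul_assoc]
  have hge : diagonal g * diagonal (Real.sqrt ∘ μ) = diagonal e := by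
    rw [diagonal_mul_diagonal]
    refine congrArg diagonal (funext fun i => ?_)
    by_cases hi : μ i = 0
    · simp [hgdef, hedef, hi]
    · have hne : Real.sqrt (μ i) ≠ 0 := by
        rw [Real.sqrt_ne_zero']
        exact lt_of_le_of_ne (hμ0 i) (Ne.symm hi)
      simp [hgdef, hedef, hi, Function.comp, inv_mul_cancel₀ hne]
  have hWsqrt : W * psdSqrtOld hN = M := by
    rw [sqrt_eq, hWdef]
    calc M * V * diagonal g * star V * (V * diagonal (Real.sqrt ∘ μ) * star V)
        = M * V * diagonal g * (star V * V) * diagonal (Real.sqrt ∘ μ) * star V := by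
          simp only [Matrix.mul_assoc]
      _ = M * V * (diagonal g * diagonal (Real.sqrt ∘ μ)) * star V := by
          rw [hV1, Matrix.mul_one]; simp only [Matrix.mul_assoc]
      _ = M * V * diagonal e * star V := by rw [hge]
      _ = M * (V * star V) := by rw [hMVe, Matrix.mul_assoc]
      _ = M := by rw [hV2, Matrix.mul_one]
  have hWWeq : Wᴴ * W = V * diagonal e * star V := by
    rw [hWconj, hWdef]
    calc V * diagonal g * (star V * Mᴴ) * (M * V * diagonal g * star V)
        = V * diagonal g * (star V * (Mᴴ * M) * V) * diagonal g * star V := by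
          simp only [Matrix.mul_assoc]
      _ = V * (diagonal g * diagonal μ * diagonal g) * star V := by
          rw [hdiagN]; simp only [Matrix.mul_assoc]
      _ = V * diagonal e * star V := by
          rw [diagonal_mul_diagonal, diagonal_mul_diagonal]
          refine congrArg₂ _ (congrArg₂ _ rfl (congrArg diagonal (funext fun i => ?_))) rfl
          by_cases hi : μ i = 0
          · simp [hgdef, hedef, hi]
          · have h1 : Real.sqrt (μ i) * Real.sqrt (μ i) = μ i := Real.mul_self_sqrt (hμ0 i)
            have hne : Real.sqrt (μ i) ≠ 0 := by
              rw [Real.sqrt_ne_zero']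
              exact lt_of_le_of_ne (hμ0 i) (Ne.symm hi)
            simp only [hgdef, hedef, if_neg hi]
            rw [← h1]
            field_simp
            rw [Real.sqrt_sq (Real.sqrt_nonneg _)]
  have hpsd : (1 - Wᴴ * W).PosSemidef := by
    have h1 : (1 : Matrix (Fin b) (Fin b) ℝ) = V * diagonal (fun _ => (1:ℝ)) * star V := by
      rw [diagonal_one, Matrix.mul_one, hV2]
    have heq : 1 - Wᴴ * W = V * diagonal (fun i => 1 - e i) * star V := by
      rw [hWWeq]
      conv_lhs => rw [h1]
      rw [← Matrix.sub_mul, ← Matrix.mul_sub, diagonal_sub]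
    rw [heq]
    have hd : Matrix.PosSemidef (diagonal (fun i => 1 - e i)) := by
      refine Matrix.PosSemidef.diagonal fun i => ?_
      by_cases hi : μ i = 0 <;> simp [hedef, hi]
    have h2 := hd.mul_mul_conjTranspose_same V
    rwa [← Matrix.star_eq_conjTranspose V] at h2
  have htrace : (Wᴴ * M).trace = (psdSqrtOld hN).trace := by
    have h1 : Wᴴ * M = V * (diagonal g * diagonal μ) * star V := by
      rw [hWconj]
      calc V * diagonal g * (star V * Mᴴ) * M
          = V * diagonal g * (star V * (Mᴴ * M)) := by simp only [Matrix.mul_assoc]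
        _ = V * diagonal g * (star V * (V * (diagonal μ * star V))) := by
            rw [spec]; simp only [Matrix.mul_assoc]
        _ = V * (diagonal g * diagonal μ) * star V := by
            rw [← Matrix.mul_assoc (star V) V (diagonal μ * star V), hV1, Matrix.one_mul]
            simp only [Matrix.mul_assoc]
    rw [h1, sqrt_eq, trace_conj_unitary _ _ hV1, trace_conj_unitary _ _ hV1,
      diagonal_mul_diagonal]
    rw [Matrix.trace_diagonal, Matrix.trace_diagonal]
    refine Finset.sum_congr rfl fun i _ => ?_
    by_cases hi : μ i = 0
    · simp [hgdef, hi, Function.comp]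
    · have h1 : Real.sqrt (μ i) * Real.sqrt (μ i) = μ i := Real.mul_self_sqrt (hμ0 i)
      have hne : Real.sqrt (μ i) ≠ 0 := by
        rw [Real.sqrt_ne_zero']
        exact lt_of_le_of_ne (hμ0 i) (Ne.symm hi)
      simp only [hgdef, if_neg hi, Function.comp_apply]
      field_simp
      exact (Real.sq_sqrt (hμ0 i)).symm
  exact ⟨W, hpsd, hWsqrt, htrace⟩
end polar

section nuclear
variable {a b : ℕ}

lemma tr_conj_le_nuclear (W M : Matrix (Fin a) (Fin b) ℝ)
    (hW : (1 - Wᴴ * W).PosSemidef) : (Wᴴ * M).trace ≤ nuclearNorm M := by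
  obtain ⟨U, hU, hUs, -⟩ := polar M
  have h1 : Wᴴ * M = (Wᴴ * U) * psdSqrtOld (posSemidef_conjTranspose_mul_self M) := by
    rw [Matrix.mul_assoc, hUs]
  have hcontr : (1 - (Wᴴ * U)ᴴ * (Wᴴ * U)).PosSemidef := by
    have h2 := contr_transfer hW
    have h3 := h2.conjTranspose_mul_mul_same U
    have h4 := hU.add h3
    have h5 : (1 - Uᴴ * U) + Uᴴ * (1 - W * Wᴴ) * U = 1 - (Wᴴ * U)ᴴ * (Wᴴ * U) := by
      simp only [conjTranspose_mul, conjTranspose_conjTranspose, Matrix.mul_sub,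
        Matrix.sub_mul, Matrix.mul_one, Matrix.one_mul, Matrix.mul_assoc]
      abel
    rwa [h5] at h4
  rw [h1, nuclearNorm]
  exact trace_mul_le_of_contr
    (psdSqrtOld_posSemidef (posSemidef_conjTranspose_mul_self M)) hcontr

lemma nuclearNorm_add_le (A B : Matrix (Fin a) (Fin b) ℝ) :
    nuclearNorm (A + B) ≤ nuclearNorm A + nuclearNorm B := by
  obtain ⟨W, hW, -, hWt⟩ := polar (A + B)
  have h : nuclearNorm (A + B) = (Wᴴ * (A + B)).trace := hWt.symm
  rw [h, Matrix.mul_add, Matrix.trace_add]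
  exact add_le_add (tr_conj_le_nuclear W A hW) (tr_conj_le_nuclear W B hW)
end nuclear

section rankbd
variable {a b : ℕ}

lemma rank_add_le' (A B : Matrix (Fin a) (Fin b) ℝ) : (A + B).rank ≤ A.rank + B.rank := by
  rw [Matrix.rank, Matrix.rank, Matrix.rank, Matrix.mulVecLin_add]
  have hle : LinearMap.range (A.mulVecLin + B.mulVecLin) ≤
      LinearMap.range A.mulVecLin ⊔ LinearMap.range B.mulVecLin := by
    rintro x ⟨y, rfl⟩
    exact Submodule.add_mem_sup ⟨y, rfl⟩ ⟨y, rfl⟩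
  exact (Submodule.finrank_mono hle).trans
    (Submodule.finrank_add_le_finrank_add_finrank _ _)

lemma nuclearNorm_le_sqrt_rank (M : Matrix (Fin a) (Fin b) ℝ) {r : ℕ} (hr : M.rank ≤ r) :
    nuclearNorm M ≤ Real.sqrt r * Real.sqrt ((Mᵀ * M).trace) := by
  have hN := posSemidef_conjTranspose_mul_self M
  set V : Matrix (Fin b) (Fin b) ℝ := (hN.1.eigenvectorUnitary : Matrix (Fin b) (Fin b) ℝ) with hVdef
  set μ : Fin b → ℝ := hN.1.eigenvalues with hμdef
  have hV1 : star V * V = 1 := hN.1.eigenvectorUnitary.2.1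
  have hμ0 : ∀ i, 0 ≤ μ i := hN.eigenvalues_nonneg
  have spec : Mᴴ * M = V * diagonal μ * star V := by
    have h := hN.1.spectral_theorem
    rwa [RCLike.ofReal_real_eq_id, Function.id_comp] at h
  have sqrt_eq : psdSqrtOld hN = V * diagonal (Real.sqrt ∘ μ) * star V := by
    rfl
  have hnuc : nuclearNorm M = ∑ i, Real.sqrt (μ i) := by
    rw [nuclearNorm, sqrt_eq, trace_conj_unitary _ _ hV1, Matrix.trace_diagonal]
    rfl
  have htr : (Mᵀ * M).trace = ∑ i, μ i := by
    rw [← conjT_eq, spec, trace_conj_unitary _ _ hV1, Matrix.trace_diagonal]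
  -- the set of nonzero eigenvalues
  classical
  set T : Finset (Fin b) := Finset.univ.filter (fun i => μ i ≠ 0) with hTdef
  have hcard : T.card ≤ r := by
    have h1 : (Mᴴ * M).rank = Fintype.card {i // μ i ≠ 0} :=
      hN.1.rank_eq_card_non_zero_eigs
    have h2 : (Mᴴ * M).rank = M.rank := by
      rw [conjT_eq]; exact Matrix.rank_transpose_mul_self M
    have h3 : T.card = Fintype.card {i // μ i ≠ 0} := by
      rw [Fintype.card_subtype]
    omega
  have hsum_eq : ∑ i, Real.sqrt (μ i) = ∑ i ∈ T, Real.sqrt (μ i) := by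
    refine (Finset.sum_subset (Finset.subset_univ T) ?_).symm
    intro i _ hiT
    have : μ i = 0 := by
      by_contra hne
      exact hiT (Finset.mem_filter.mpr ⟨Finset.mem_univ i, hne⟩)
    rw [this, Real.sqrt_zero]
  have hsq : (∑ i ∈ T, Real.sqrt (μ i))^2 ≤ (r : ℝ) * ∑ i, μ i := by
    calc (∑ i ∈ T, Real.sqrt (μ i))^2 ≤ (T.card : ℝ) * ∑ i ∈ T, (Real.sqrt (μ i))^2 := by
          exact_mod_cast sq_sum_le_card_mul_sum_sq (s := T) (f := fun i => Real.sqrt (μ i))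
      _ ≤ (r : ℝ) * ∑ i, μ i := by
          apply mul_le_mul
          · exact_mod_cast hcard
          · calc ∑ i ∈ T, Real.sqrt (μ i) ^ 2 = ∑ i ∈ T, μ i := by
                  refine Finset.sum_congr rfl fun i _ => Real.sq_sqrt (hμ0 i)
              _ ≤ ∑ i, μ i := Finset.sum_le_sum_of_subset_of_nonneg
                  (Finset.subset_univ T) (fun i _ _ => hμ0 i)
          · positivity
          · positivity
  rw [hnuc, hsum_eq, htr]
  have hnn : 0 ≤ ∑ i ∈ T, Real.sqrt (μ i) :=
    Finset.sum_nonneg fun i _ => Real.sqrt_nonneg _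
  calc ∑ i ∈ T, Real.sqrt (μ i) = Real.sqrt ((∑ i ∈ T, Real.sqrt (μ i))^2) := by
        rw [Real.sqrt_sq hnn]
    _ ≤ Real.sqrt ((r : ℝ) * ∑ i, μ i) := Real.sqrt_le_sqrt hsq
    _ = Real.sqrt r * Real.sqrt (∑ i, μ i) := Real.sqrt_mul (by positivity) _
end rankbd

section app
variable {p m q c d : ℕ}

lemma frob_le_of_orth (X Y : Matrix (Fin p) (Fin m) ℝ) (h : (Xᵀ * Y).trace = 0) :
    Real.sqrt ((Xᵀ * X).trace) ≤ Real.sqrt ((((X + Y))ᵀ * (X + Y)).trace) := by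
  apply Real.sqrt_le_sqrt
  have hyy := trace_tmul_nonneg Y
  have hyx : (Yᵀ * X).trace = 0 := by
    rw [← Matrix.trace_transpose, transpose_mul, transpose_transpose, h]
  rw [transpose_add, Matrix.add_mul, Matrix.mul_add, Matrix.mul_add, Matrix.trace_add,
    Matrix.trace_add, Matrix.trace_add, h, hyx]
  linarith

lemma cross_zero (Uc : Matrix (Fin p) (Fin c) ℝ) (Vc : Matrix (Fin m) (Fin d) ℝ)
    (hUc : Ucᵀ * Uc = 1) (hVc : Vcᵀ * Vc = 1) (ΔA B : Matrix (Fin p) (Fin m) ℝ)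
    (hB : B = Uc * Ucᵀ * ΔA * Vc * Vcᵀ) :
    ((ΔA - B)ᵀ * B).trace = 0 := by
  have hB' : B = (Uc * Ucᵀ) * ΔA * (Vc * Vcᵀ) := by rw [hB]; simp only [Matrix.mul_assoc]
  set P : Matrix (Fin p) (Fin p) ℝ := Uc * Ucᵀ with hPdef
  set Q : Matrix (Fin m) (Fin m) ℝ := Vc * Vcᵀ with hQdef
  have hPP : P * P = P := by
    rw [hPdef]
    calc Uc * Ucᵀ * (Uc * Ucᵀ) = Uc * ((Ucᵀ * Uc) * Ucᵀ) := by simp only [Matrix.mul_assoc]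
      _ = Uc * Ucᵀ := by rw [hUc, Matrix.one_mul]
  have hQQ : Q * Q = Q := by
    rw [hQdef]
    calc Vc * Vcᵀ * (Vc * Vcᵀ) = Vc * ((Vcᵀ * Vc) * Vcᵀ) := by simp only [Matrix.mul_assoc]
      _ = Vc * Vcᵀ := by rw [hVc, Matrix.one_mul]
  have hPt : Pᵀ = P := by rw [hPdef, transpose_mul, transpose_transpose]
  have hQt : Qᵀ = Q := by rw [hQdef, transpose_mul, transpose_transpose]
  have hPB : P * B = B := by
    rw [hB', ← Matrix.mul_assoc, ← Matrix.mul_assoc, ← Matrix.mul_assoc, hPP]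
    simp only [Matrix.mul_assoc]
    rfl
  have hBQ : B * Q = B := by
    rw [hB', Matrix.mul_assoc, hQQ]
  have hBt : Q * Bᵀ * P = Bᵀ := by
    have h1 : P * B * Q = B := by rw [hPB, hBQ]
    have h2 := congrArg Matrix.transpose h1
    rwa [Matrix.transpose_mul (P * B) Q, Matrix.transpose_mul P B, hPt, hQt, ← Matrix.mul_assoc] at h2
  have key : (Bᵀ * B).trace = (ΔAᵀ * B).trace := by
    calc (Bᵀ * B).trace = ((Bᵀ * P) * (ΔA * Q)).trace := by
          conv_rhs => rw [Matrix.mul_assoc, ← Matrix.mul_assoc P ΔA Q, ← hB']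
      _ = ((ΔA * Q) * (Bᵀ * P)).trace := Matrix.trace_mul_comm _ _
      _ = (ΔA * (Q * Bᵀ * P)).trace := by simp only [Matrix.mul_assoc]
      _ = (ΔA * Bᵀ).trace := by rw [hBt]
      _ = (Bᵀ * ΔA).trace := Matrix.trace_mul_comm _ _
      _ = (ΔAᵀ * B).trace := by
          rw [← Matrix.trace_transpose, transpose_mul, transpose_transpose]
  rw [transpose_sub, Matrix.sub_mul, Matrix.trace_sub, key, sub_self]
end app

lemma vecL1_add_le {p q : ℕ} (M N : Matrix (Fin p) (Fin q) ℝ) :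
    vecL1 (M + N) ≤ vecL1 M + vecL1 N := by
  rw [vecL1, vecL1, vecL1, ← Finset.sum_add_distrib]
  refine Finset.sum_le_sum fun i _ => ?_
  rw [← Finset.sum_add_distrib]
  refine Finset.sum_le_sum fun j _ => ?_
  rw [Matrix.add_apply]
  exact abs_add_le _ _

/-- Bound on the weighted regularizer `Ψ(Δ)` over the restricted cone, used in
the proof of Theorem 3. -/
theorem stmt_9
    (p m q k s : ℕ)
    (Uk : Matrix (Fin p) (Fin k) ℝ) (Uc : Matrix (Fin p) (Fin (p - k)) ℝ)
    (Vk : Matrix (Fin m) (Fin k) ℝ) (Vc : Matrix (Fin m) (Fin (m - k)) ℝ)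
    (hUk : Ukᵀ * Uk = 1) (hUc : Ucᵀ * Uc = 1) (hUkc : Ukᵀ * Uc = 0)
    (hUfull : Uk * Ukᵀ + Uc * Ucᵀ = 1)
    (hVk : Vkᵀ * Vk = 1) (hVc : Vcᵀ * Vc = 1) (hVkc : Vkᵀ * Vc = 0)
    (hVfull : Vk * Vkᵀ + Vc * Vcᵀ = 1)
    (ΔA ΔA1 ΔA2 : Matrix (Fin p) (Fin m) ℝ)
    (hΔA2 : ΔA2 = Uc * Ucᵀ * ΔA * Vc * Vcᵀ) (hΔA1 : ΔA1 = ΔA - ΔA2)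
    (ΔΦ ΔΦ1 ΔΦ2 : Matrix (Fin p) (Fin q) ℝ)
    (S : Finset (Fin p × Fin q)) (hs : S.card = s)
    (hΔΦ1 : ∀ i j, ΔΦ1 i j = if (i, j) ∈ S then ΔΦ i j else 0)
    (hΔΦ2 : ΔΦ2 = ΔΦ - ΔΦ1)
    (lA lΦ : ℝ) (hlA0 : 0 ≤ lA) (hlΦ0 : 0 ≤ lΦ)
    (hcone : lA * nuclearNorm ΔA2 + lΦ * vecL1 ΔΦ2
      ≤ 3 * lA * nuclearNorm ΔA1 + 3 * lΦ * vecL1 ΔΦ1) :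
    lA * nuclearNorm ΔA + lΦ * vecL1 ΔΦ
      ≤ 4 * (lA * Real.sqrt (2 * k) * frobNorm ΔA
          + lΦ * Real.sqrt s * frobNorm ΔΦ) := by
  
  classical
  -- decomposition facts for ΔA
  have hAsum : ΔA = ΔA1 + ΔA2 := by rw [hΔA1]; abel
  have hcross : (ΔA1ᵀ * ΔA2).trace = 0 := by
    rw [hΔA1]; exact cross_zero Uc Vc hUc hVc ΔA ΔA2 hΔA2
  have hfrobA1 : frobNorm ΔA1 ≤ frobNorm ΔA := by
    rw [frobNorm, frobNorm]
    have h := frob_le_of_orth ΔA1 ΔA2 hcross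
    rwa [← hAsum] at h
  have hrank : ΔA1.rank ≤ 2 * k := by
    have h1 : Uk * Ukᵀ = 1 - Uc * Ucᵀ := by rw [← hUfull]; abel
    have h2 : Vk * Vkᵀ = 1 - Vc * Vcᵀ := by rw [← hVfull]; abel
    have key : ΔA1 = Uk * (Ukᵀ * ΔA) + ((Uc * Ucᵀ * ΔA) * Vk) * Vkᵀ := by
      rw [hΔA1, hΔA2, ← Matrix.mul_assoc Uk Ukᵀ ΔA, h1,
        Matrix.mul_assoc (Uc * Ucᵀ * ΔA) Vk Vkᵀ, h2,
        Matrix.sub_mul, Matrix.mul_sub, Matrix.one_mul, Matrix.mul_one,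
        Matrix.mul_assoc (Uc * Ucᵀ * ΔA) Vc Vcᵀ]
      abel
    calc ΔA1.rank ≤ (Uk * (Ukᵀ * ΔA)).rank + (((Uc * Ucᵀ * ΔA) * Vk) * Vkᵀ).rank := by
          rw [key]; exact rank_add_le' _ _
      _ ≤ k + k := add_le_add
          ((Matrix.rank_mul_le_left _ _).trans (Matrix.rank_le_width Uk))
          ((Matrix.rank_mul_le_right _ _).trans (Matrix.rank_le_height Vkᵀ))
      _ = 2 * k := by ring
  have hnucA1 : nuclearNorm ΔA1 ≤ Real.sqrt (2 * k) * frobNorm ΔA := by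
    have h1 := nuclearNorm_le_sqrt_rank ΔA1 hrank
    have hc : ((2 * k : ℕ) : ℝ) = 2 * (k : ℝ) := by push_cast; ring
    rw [hc] at h1
    calc nuclearNorm ΔA1 ≤ Real.sqrt (2 * k) * frobNorm ΔA1 := by rw [frobNorm]; exact h1
      _ ≤ Real.sqrt (2 * k) * frobNorm ΔA :=
          mul_le_mul_of_nonneg_left hfrobA1 (Real.sqrt_nonneg _)
  have hnucA : nuclearNorm ΔA ≤ nuclearNorm ΔA1 + nuclearNorm ΔA2 := by
    conv_lhs => rw [hAsum]
    exact nuclearNorm_add_le _ _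
  -- decomposition facts for ΔΦ
  have hPsum : ΔΦ = ΔΦ1 + ΔΦ2 := by rw [hΔΦ2]; abel
  have hv1 : vecL1 ΔΦ ≤ vecL1 ΔΦ1 + vecL1 ΔΦ2 := by
    conv_lhs => rw [hPsum]
    exact vecL1_add_le _ _
  have hvs : vecL1 ΔΦ1 ≤ Real.sqrt s * frobNorm ΔΦ := by
    have e0 : ∑ x ∈ S, |ΔΦ1 x.1 x.2| = ∑ x : Fin p × Fin q, |ΔΦ1 x.1 x.2| :=
      Finset.sum_subset (Finset.subset_univ S) (fun x _ hx => by
        rw [hΔΦ1 x.1 x.2, if_neg (by simpa using hx), abs_zero])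
    have e1 : vecL1 ΔΦ1 = ∑ x ∈ S, |ΔΦ x.1 x.2| := by
      have ht : (∑ x : Fin p × Fin q, |ΔΦ1 x.1 x.2|) = ∑ i, ∑ j, |ΔΦ1 i j| :=
        Fintype.sum_prod_type _
      rw [vecL1, ← ht, ← e0]
      exact Finset.sum_congr rfl fun x hx => by rw [hΔΦ1 x.1 x.2, if_pos (by simpa using hx)]
    have e2 : (∑ x ∈ S, |ΔΦ x.1 x.2|)^2 ≤ (s : ℝ) * ((ΔΦᵀ * ΔΦ).trace) := by
      calc (∑ x ∈ S, |ΔΦ x.1 x.2|)^2 ≤ (S.card : ℝ) * ∑ x ∈ S, |ΔΦ x.1 x.2|^2 := by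
            exact_mod_cast sq_sum_le_card_mul_sum_sq (s := S) (f := fun x => |ΔΦ x.1 x.2|)
        _ ≤ (s : ℝ) * ∑ x : Fin p × Fin q, (ΔΦ x.1 x.2)^2 := by
            rw [hs]
            refine mul_le_mul_of_nonneg_left ?_ (by positivity)
            calc ∑ x ∈ S, |ΔΦ x.1 x.2|^2 = ∑ x ∈ S, (ΔΦ x.1 x.2)^2 := by
                  simp [sq_abs]
              _ ≤ _ := Finset.sum_le_sum_of_subset_of_nonneg
                  (Finset.subset_univ S) (fun _ _ _ => sq_nonneg _)
        _ = (s : ℝ) * (ΔΦᵀ * ΔΦ).trace := by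
            rw [trace_tmul_eq_sum_sq]
            congr 1
            have ht2 : (∑ x : Fin p × Fin q, (ΔΦ x.1 x.2)^2) = ∑ i, ∑ j, (ΔΦ i j)^2 :=
              Fintype.sum_prod_type _
            rw [ht2, Finset.sum_comm]
    rw [e1, frobNorm]
    have hnn : 0 ≤ ∑ x ∈ S, |ΔΦ x.1 x.2| := Finset.sum_nonneg fun _ _ => abs_nonneg _
    calc ∑ x ∈ S, |ΔΦ x.1 x.2| = Real.sqrt ((∑ x ∈ S, |ΔΦ x.1 x.2|)^2) :=
          (Real.sqrt_sq hnn).symm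
      _ ≤ Real.sqrt ((s : ℝ) * (ΔΦᵀ * ΔΦ).trace) := Real.sqrt_le_sqrt e2
      _ = Real.sqrt s * Real.sqrt ((ΔΦᵀ * ΔΦ).trace) := Real.sqrt_mul (by positivity) _
  -- assemble
  have c1 : lA * nuclearNorm ΔA ≤ lA * (nuclearNorm ΔA1 + nuclearNorm ΔA2) :=
    mul_le_mul_of_nonneg_left hnucA hlA0
  have c2 : lΦ * vecL1 ΔΦ ≤ lΦ * (vecL1 ΔΦ1 + vecL1 ΔΦ2) :=
    mul_le_mul_of_nonneg_left hv1 hlΦ0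
  have c3 : lA * nuclearNorm ΔA1 ≤ lA * (Real.sqrt (2 * k) * frobNorm ΔA) :=
    mul_le_mul_of_nonneg_left hnucA1 hlA0
  have c4 : lΦ * vecL1 ΔΦ1 ≤ lΦ * (Real.sqrt s * frobNorm ΔΦ) :=
    mul_le_mul_of_nonneg_left hvs hlΦ0
  nlinarith [c1, c2, c3, c4, hcone]
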